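/- Boundedness of sublevel sets of the LQG cost: let 𝒟 ⊆ ℝ^{mN×pN} be a linear subspace such that K·G is nilpotent for every K ∈ 𝒟. Then for every K₀ ∈ 𝒟, the sublevel set ℒ = {K ∈ 𝒟 : J(K) ≤ J(K₀)} is a bounded subset of ℝ^{mN×pN}. -/

import Mathlib

open Matrix

noncomputable section

/-- Squared Frobenius norm of a real matrix. -/
def frobSq {a b : Type*} [Fintype a] [Fintype b] (A : Matrix a b ℝ) : ℝ :=
  ∑ i, ∑ j, (A i j) ^ 2

/-- Squared Euclidean norm of a real vector. -/
def vecSq {a : Type*} [Fintype a] (v : a → ℝ) : ℝ :=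
  ∑ i, (v i) ^ 2

/-- The finite-horizon LQG cost `J(K)` of the paper, written in terms of the
square roots `Msq = M^{1/2}`, `Swsq = Σw^{1/2}`, `Rsq = R^{1/2}`, `Svsq = Σv^{1/2}`. -/
def Jcost {nn mm pp : ℕ}
    (P11 : Matrix (Fin nn) (Fin nn) ℝ) (P12 : Matrix (Fin nn) (Fin mm) ℝ)
    (C : Matrix (Fin pp) (Fin nn) ℝ)
    (Msq Swsq : Matrix (Fin nn) (Fin nn) ℝ)
    (Rsq : Matrix (Fin mm) (Fin mm) ℝ) (Svsq : Matrix (Fin pp) (Fin pp) ℝ)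
    (μ : Fin nn → ℝ) (K : Matrix (Fin mm) (Fin pp) ℝ) : ℝ :=
  frobSq (Msq * (1 - P12 * K * C)⁻¹ * P11 * Swsq)
  + frobSq (Msq * P12 * K * (1 - C * P12 * K)⁻¹ * Svsq)
  + frobSq (Rsq * K * (1 - C * P12 * K)⁻¹ * C * P11 * Swsq)
  + frobSq (Rsq * K * (1 - C * P12 * K)⁻¹ * Svsq)
  + vecSq ((Msq * (1 - P12 * K * C)⁻¹ * P11).mulVec μ)
  + vecSq ((Rsq * K * (1 - C * P12 * K)⁻¹ * C * P11).mulVec μ)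

/-- The disturbance-feedback cost `J̃(Q)` of the paper, written in terms of the
square roots `Msq = M^{1/2}`, `Swsq = Σw^{1/2}`, `Rsq = R^{1/2}`, `Svsq = Σv^{1/2}`. -/
def Jtilde {nn mm pp : ℕ}
    (P11 : Matrix (Fin nn) (Fin nn) ℝ) (P12 : Matrix (Fin nn) (Fin mm) ℝ)
    (C : Matrix (Fin pp) (Fin nn) ℝ)
    (Msq Swsq : Matrix (Fin nn) (Fin nn) ℝ)
    (Rsq : Matrix (Fin mm) (Fin mm) ℝ) (Svsq : Matrix (Fin pp) (Fin pp) ℝ)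
    (μ : Fin nn → ℝ) (Q : Matrix (Fin mm) (Fin pp) ℝ) : ℝ :=
  frobSq (Msq * (1 + P12 * Q * C) * P11 * Swsq)
  + frobSq (Msq * P12 * Q * Svsq)
  + frobSq (Rsq * Q * C * P11 * Swsq)
  + frobSq (Rsq * Q * Svsq)
  + vecSq ((Rsq * Q * C * P11).mulVec μ)
  + vecSq ((Msq * (1 + P12 * Q * C) * P11).mulVec μ)

namespace Matrix.PosSemidef

/-- The positive semidefinite square root of a positive semidefinite matrix (the definition
`Matrix.PosSemidef.sqrt` of the older Mathlib, which has since been removed). -/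
def sqrt {n 𝕜 : Type*} [Fintype n] [DecidableEq n] [RCLike 𝕜] [PartialOrder 𝕜] {A : Matrix n n 𝕜}
    (hA : A.PosSemidef) : Matrix n n 𝕜 :=
  hA.1.eigenvectorUnitary.1 * diagonal ((↑) ∘ Real.sqrt ∘ hA.1.eigenvalues) *
  (star hA.1.eigenvectorUnitary : Matrix n n 𝕜)

end Matrix.PosSemidef

end

lemma psd_sqrt_mul_self_real {r : ℕ} {A : Matrix (Fin r) (Fin r) ℝ} (hA : A.PosSemidef) :
    hA.sqrt * hA.sqrt = A := by
  have hU : (star hA.1.eigenvectorUnitary : Matrix (Fin r) (Fin r) ℝ) *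
      hA.1.eigenvectorUnitary.1 = 1 := Unitary.coe_star_mul_self _
  have hD : diagonal ((RCLike.ofReal : ℝ → ℝ) ∘ Real.sqrt ∘ hA.1.eigenvalues) *
      diagonal ((RCLike.ofReal : ℝ → ℝ) ∘ Real.sqrt ∘ hA.1.eigenvalues) =
      diagonal (RCLike.ofReal ∘ hA.1.eigenvalues) := by
    rw [diagonal_mul_diagonal]
    congr 1
    funext i
    simp [Real.mul_self_sqrt (hA.eigenvalues_nonneg i)]
  conv_rhs => rw [hA.1.spectral_theorem, Unitary.conjStarAlgAut_apply]
  unfold Matrix.PosSemidef.sqrt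
  rw [← hD]
  simp only [Matrix.mul_assoc]
  rw [← Matrix.mul_assoc (star hA.1.eigenvectorUnitary : Matrix (Fin r) (Fin r) ℝ), hU,
    Matrix.one_mul]

section AuxLemmas

attribute [local instance] Matrix.frobeniusSeminormedAddCommGroup

lemma frobSq_nonneg {a b : Type*} [Fintype a] [Fintype b] (A : Matrix a b ℝ) : 0 ≤ frobSq A :=
  Finset.sum_nonneg fun _ _ => Finset.sum_nonneg fun _ _ => sq_nonneg _

lemma vecSq_nonneg {a : Type*} [Fintype a] (v : a → ℝ) : 0 ≤ vecSq v :=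
  Finset.sum_nonneg fun _ _ => sq_nonneg _

lemma frobSq_eq_sq_norm {a b : Type*} [Fintype a] [Fintype b] (A : Matrix a b ℝ) :
    frobSq A = ‖A‖ ^ 2 := by
  have hnn : (0:ℝ) ≤ ∑ i, ∑ j, (A i j) ^ 2 :=
    Finset.sum_nonneg fun _ _ => Finset.sum_nonneg fun _ _ => sq_nonneg _
  have h1 : ‖A‖ = (∑ i, ∑ j, (A i j) ^ 2) ^ (1/2 : ℝ) := by
    rw [Matrix.frobenius_norm_def]
    congr 1
    refine Finset.sum_congr rfl fun i _ => Finset.sum_congr rfl fun j _ => ?_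
    rw [show (2:ℝ) = ((2:ℕ):ℝ) by norm_num, Real.rpow_natCast, Real.norm_eq_abs, sq_abs]
  rw [frobSq, h1, ← Real.rpow_natCast ((∑ i, ∑ j, (A i j) ^ 2) ^ (1/2 : ℝ)) 2,
    ← Real.rpow_mul hnn]
  norm_num

lemma frobNorm_eq_sqrt {a b : Type*} [Fintype a] [Fintype b] (A : Matrix a b ℝ) :
    ‖A‖ = Real.sqrt (frobSq A) := by
  rw [frobSq_eq_sq_norm, Real.sqrt_sq (norm_nonneg _)]

lemma abs_entry_le_frobNorm {a b : Type*} [Fintype a] [Fintype b] (A : Matrix a b ℝ)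
    (i : a) (j : b) : |A i j| ≤ ‖A‖ := by
  have h : (A i j) ^ 2 ≤ frobSq A := by
    have h1 : (A i j) ^ 2 ≤ ∑ j', (A i j') ^ 2 :=
      Finset.single_le_sum (f := fun j' => (A i j') ^ 2)
        (fun _ _ => sq_nonneg _) (Finset.mem_univ j)
    exact h1.trans (Finset.single_le_sum (f := fun i' => ∑ j', (A i' j') ^ 2)
      (fun _ _ => Finset.sum_nonneg fun _ _ => sq_nonneg _) (Finset.mem_univ i))
  calc |A i j| = Real.sqrt ((A i j) ^ 2) := (Real.sqrt_sq_eq_abs _).symm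
    _ ≤ Real.sqrt (frobSq A) := Real.sqrt_le_sqrt h
    _ = ‖A‖ := (frobNorm_eq_sqrt A).symm

lemma matrix_pow_card_eq_zero_of_isNilpotent {r : ℕ} (X : Matrix (Fin r) (Fin r) ℝ)
    (h : IsNilpotent X) : X ^ r = 0 := by
  have h1 := (Matrix.isNilpotent_charpoly_sub_pow_of_isNilpotent h).eq_zero
  have h2 : X.charpoly = Polynomial.X ^ r := by
    have h3 := sub_eq_zero.mp h1
    simpa [Fintype.card_fin] using h3
  have h4 := X.aeval_self_charpoly
  rw [h2] at h4
  simpa [map_pow] using h4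

lemma matrix_isNilpotent_comm {s t : ℕ} (X : Matrix (Fin s) (Fin t) ℝ)
    (Y : Matrix (Fin t) (Fin s) ℝ) (h : IsNilpotent (X * Y)) : IsNilpotent (Y * X) := by
  obtain ⟨k, hk⟩ := h
  have key : ∀ j : ℕ, (Y * X) ^ (j + 1) = Y * (X * Y) ^ j * X := by
    intro j
    induction j with
    | zero => simp
    | succ t ih => rw [pow_succ, ih, pow_succ]; simp only [Matrix.mul_assoc]
  exact ⟨k + 1, by rw [key, hk]; simp⟩

lemma matrix_norm_pow_le_c0 {r : ℕ} (X : Matrix (Fin r) (Fin r) ℝ) (i : ℕ) :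
    ‖X ^ i‖ ≤ max 1 ‖(1 : Matrix (Fin r) (Fin r) ℝ)‖ * ‖X‖ ^ i := by
  induction i with
  | zero => simpa using le_max_right 1 ‖(1 : Matrix (Fin r) (Fin r) ℝ)‖
  | succ t ih =>
    calc ‖X ^ (t + 1)‖ = ‖X ^ t * X‖ := by rw [pow_succ]
      _ ≤ ‖X ^ t‖ * ‖X‖ := Matrix.frobenius_norm_mul _ _
      _ ≤ (max 1 ‖(1 : Matrix (Fin r) (Fin r) ℝ)‖ * ‖X‖ ^ t) * ‖X‖ :=
          mul_le_mul_of_nonneg_right ih (norm_nonneg _)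
      _ = max 1 ‖(1 : Matrix (Fin r) (Fin r) ℝ)‖ * ‖X‖ ^ (t + 1) := by ring


/-- Boundedness of sublevel sets of the LQG cost: if `𝒟` is a linear subspace
of `ℝ^{mN×pN}` on which `K·G` is nilpotent (`G = C·P12`), then for every `K₀ ∈ 𝒟` the sublevel
set `{K ∈ 𝒟 : J(K) ≤ J(K₀)}` is bounded (all entries of its elements are uniformly bounded). -/
theorem sublevel_sets_bounded {n m p N : ℕ}
    (hn : 0 < n) (hm : 0 < m) (hp : 0 < p) (hN : 0 < N)
    (P11 : Matrix (Fin (n * (N + 1))) (Fin (n * (N + 1))) ℝ)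
    (P12 : Matrix (Fin (n * (N + 1))) (Fin (m * N)) ℝ)
    (C : Matrix (Fin (p * N)) (Fin (n * (N + 1))) ℝ)
    {M W : Matrix (Fin (n * (N + 1))) (Fin (n * (N + 1))) ℝ}
    {R : Matrix (Fin (m * N)) (Fin (m * N)) ℝ}
    {V : Matrix (Fin (p * N)) (Fin (p * N)) ℝ}
    (hM : M.PosSemidef) (hW : W.PosSemidef) (hR : R.PosDef) (hV : V.PosDef)
    (μ : Fin (n * (N + 1)) → ℝ)
    (G : Matrix (Fin (p * N)) (Fin (m * N)) ℝ) (hG : G = C * P12)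
    (𝒟 : Submodule ℝ (Matrix (Fin (m * N)) (Fin (p * N)) ℝ))
    (hnilp : ∀ K ∈ 𝒟, IsNilpotent (K * G))
    (K₀ : Matrix (Fin (m * N)) (Fin (p * N)) ℝ) (hK₀ : K₀ ∈ 𝒟) :
    ∃ B : ℝ, ∀ K ∈ 𝒟,
      Jcost P11 P12 C hM.sqrt hW.sqrt hR.posSemidef.sqrt hV.posSemidef.sqrt μ K ≤
        Jcost P11 P12 C hM.sqrt hW.sqrt hR.posSemidef.sqrt hV.posSemidef.sqrt μ K₀ →
      ∀ i j, |K i j| ≤ B := by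
  classical
  subst hG
  set Rsq := hR.posSemidef.sqrt with hRsqdef
  set Svsq := hV.posSemidef.sqrt with hSvsqdef
  set J₀ := Jcost P11 P12 C hM.sqrt hW.sqrt Rsq Svsq μ K₀ with hJ₀def
  set c0 := max 1 ‖(1 : Matrix (Fin (p * N)) (Fin (p * N)) ℝ)‖ with hc0def
  set B1 := ‖Rsq⁻¹‖ * Real.sqrt J₀ * ‖Svsq⁻¹‖ with hB1def
  have hB1 : 0 ≤ B1 :=
    mul_nonneg (mul_nonneg (norm_nonneg _) (Real.sqrt_nonneg _)) (norm_nonneg _)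
  refine ⟨B1 * ∑ i ∈ Finset.range (p * N), c0 * (‖C * P12‖ * B1) ^ i, ?_⟩
  intro K hK hle i j
  -- invertibility of the square roots
  have hRdet : IsUnit Rsq.det := by
    have h1 : Rsq * Rsq = R := psd_sqrt_mul_self_real hR.posSemidef
    have h2 : Rsq.det * Rsq.det = R.det := by rw [← Matrix.det_mul, h1]
    have h3 : R.det ≠ 0 := ne_of_gt hR.det_pos
    exact isUnit_iff_ne_zero.mpr fun h0 => h3 (by rw [← h2, h0, zero_mul])
  have hVdet : IsUnit Svsq.det := by
    have h1 : Svsq * Svsq = V := psd_sqrt_mul_self_real hV.posSemidef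
    have h2 : Svsq.det * Svsq.det = V.det := by rw [← Matrix.det_mul, h1]
    have h3 : V.det ≠ 0 := ne_of_gt hV.det_pos
    exact isUnit_iff_ne_zero.mpr fun h0 => h3 (by rw [← h2, h0, zero_mul])
  have hRinv : Rsq⁻¹ * Rsq = 1 := Matrix.nonsing_inv_mul _ hRdet
  have hVinv : Svsq * Svsq⁻¹ = 1 := Matrix.mul_nonsing_inv _ hVdet
  -- nilpotency facts
  have hKAnil : IsNilpotent (K * (C * P12)) := hnilp K hK
  have hAKnil : IsNilpotent ((C * P12) * K) := matrix_isNilpotent_comm _ _ hKAnil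
  have hAKpow : ((C * P12) * K) ^ (p * N) = 0 :=
    matrix_pow_card_eq_zero_of_isNilpotent _ hAKnil
  set S := ∑ i ∈ Finset.range (p * N), ((C * P12) * K) ^ i with hSdef
  have hS1 : (1 - C * P12 * K) * S = 1 := by
    have h := mul_neg_geom_sum ((C * P12) * K) (p * N)
    rw [hAKpow, sub_zero] at h
    rw [← hSdef] at h
    exact h
  have hinv : (1 - C * P12 * K)⁻¹ = S := Matrix.inv_eq_right_inv hS1
  -- the coercive term of the cost bounds frobSq (Rsq * K * S * Svsq)
  have h4 : frobSq (Rsq * K * S * Svsq) ≤ J₀ := by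
    simp only [Jcost] at hle
    rw [hinv] at hle
    linarith [frobSq_nonneg (hM.sqrt * (1 - P12 * K * C)⁻¹ * P11 * hW.sqrt),
      frobSq_nonneg (hM.sqrt * P12 * K * S * Svsq),
      frobSq_nonneg (Rsq * K * S * C * P11 * hW.sqrt),
      vecSq_nonneg ((hM.sqrt * (1 - P12 * K * C)⁻¹ * P11).mulVec μ),
      vecSq_nonneg ((Rsq * K * S * C * P11).mulVec μ)]
  have h4' : frobSq (Rsq * (K * S) * Svsq) ≤ J₀ := by
    rw [show Rsq * (K * S) * Svsq = Rsq * K * S * Svsq by simp only [Matrix.mul_assoc]]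
    exact h4
  have hmid : ‖Rsq * (K * S) * Svsq‖ ≤ Real.sqrt J₀ := by
    rw [frobNorm_eq_sqrt]
    exact Real.sqrt_le_sqrt h4'
  have hQrepr : K * S = Rsq⁻¹ * (Rsq * (K * S) * Svsq) * Svsq⁻¹ := by
    calc K * S = Rsq⁻¹ * Rsq * (K * S) * (Svsq * Svsq⁻¹) := by
          rw [hRinv, hVinv, Matrix.one_mul, Matrix.mul_one]
      _ = Rsq⁻¹ * (Rsq * (K * S) * Svsq) * Svsq⁻¹ := by simp only [Matrix.mul_assoc]
  have hQn : ‖K * S‖ ≤ B1 := by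
    rw [hQrepr]
    calc ‖Rsq⁻¹ * (Rsq * (K * S) * Svsq) * Svsq⁻¹‖
        ≤ ‖Rsq⁻¹ * (Rsq * (K * S) * Svsq)‖ * ‖Svsq⁻¹‖ := Matrix.frobenius_norm_mul _ _
      _ ≤ ‖Rsq⁻¹‖ * ‖Rsq * (K * S) * Svsq‖ * ‖Svsq⁻¹‖ :=
          mul_le_mul_of_nonneg_right (Matrix.frobenius_norm_mul _ _) (norm_nonneg _)
      _ ≤ ‖Rsq⁻¹‖ * Real.sqrt J₀ * ‖Svsq⁻¹‖ :=
          mul_le_mul_of_nonneg_right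
            (mul_le_mul_of_nonneg_left hmid (norm_nonneg _)) (norm_nonneg _)
      _ = B1 := rfl
  -- express K as (K * S) * T with T a fixed-length geometric sum
  have hcomm : Commute ((C * P12) * K) S :=
    Commute.sum_right _ _ _ fun i _ => (Commute.refl _).pow_right i
  have hAQnil : IsNilpotent ((C * P12) * (K * S)) := by
    rw [show (C * P12) * (K * S) = ((C * P12) * K) * S from (Matrix.mul_assoc _ _ _).symm]
    exact hcomm.isNilpotent_mul_right hAKnil
  have hAQpow : ((C * P12) * (K * S)) ^ (p * N) = 0 :=
    matrix_pow_card_eq_zero_of_isNilpotent _ hAQnil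
  set T := ∑ i ∈ Finset.range (p * N), (-((C * P12) * (K * S))) ^ i with hTdef
  have hxpow : (-((C * P12) * (K * S))) ^ (p * N) = 0 := by
    rw [neg_pow, hAQpow, mul_zero]
  have hT : (1 + (C * P12) * (K * S)) * T = 1 := by
    have h := mul_neg_geom_sum (-((C * P12) * (K * S))) (p * N)
    rw [hxpow, sub_zero, sub_neg_eq_add] at h
    rw [← hTdef] at h
    exact h
  have hSeq : S = 1 + (C * P12) * (K * S) := by
    have h := hS1
    rw [sub_mul, Matrix.one_mul] at h
    have h2 : S = 1 + C * P12 * K * S := sub_eq_iff_eq_add.mp h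
    rw [Matrix.mul_assoc (C * P12) K S] at h2
    exact h2
  have hST : S * T = 1 := by rw [hSeq]; exact hT
  have hKQT : K = (K * S) * T := by rw [Matrix.mul_assoc, hST, Matrix.mul_one]
  -- bound the norm of T
  have hAQn : ‖-((C * P12) * (K * S))‖ ≤ ‖C * P12‖ * B1 := by
    rw [norm_neg]
    exact (Matrix.frobenius_norm_mul _ _).trans
      (mul_le_mul_of_nonneg_left hQn (norm_nonneg _))
  have hTn : ‖T‖ ≤ ∑ i ∈ Finset.range (p * N), c0 * (‖C * P12‖ * B1) ^ i := by
    refine (norm_sum_le _ _).trans (Finset.sum_le_sum fun i _ => ?_)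
    refine (matrix_norm_pow_le_c0 _ i).trans ?_
    have hpow : ‖-((C * P12) * (K * S))‖ ^ i ≤ (‖C * P12‖ * B1) ^ i :=
      pow_le_pow_left₀ (norm_nonneg _) hAQn i
    exact mul_le_mul_of_nonneg_left hpow (le_trans zero_le_one (le_max_left _ _))
  have hKn : ‖K‖ ≤ B1 * ∑ i ∈ Finset.range (p * N), c0 * (‖C * P12‖ * B1) ^ i := by
    conv_lhs => rw [hKQT]
    exact (Matrix.frobenius_norm_mul _ _).trans
      (mul_le_mul hQn hTn (norm_nonneg _) hB1)
  exact (abs_entry_le_frobNorm K i j).trans hKn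

end AuxLemmas
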